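/- arXiv:2011.04922 — 3 statements merged into one kernel-verified Lean document; each statement's English description precedes it below -/
import Mathlib

section
/- Fix integers d ≥ 1 and ℓ ≥ 1, and let U₁, …, U_M be the points of the ℓ-th principal lattice P_ℓ of the simplex Δ_d, where M = binom(ℓ+d, d). Then the Vandermonde-type matrix 𝒱 defined by 𝒱_{k,α} = U_k^α is invertible. -/
open MeasureTheory Finset
open scoped ENNReal

noncomputable section

/-- The largest integer strictly less than `β` (for `β > 0`). -/
def lflr (β : ℝ) : ℕ := ⌈β⌉₊ - 1

/-- The Euclidean (`ℓ²`) norm on `Fin d → ℝ`. -/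
noncomputable def l2norm {d : ℕ} (x : Fin d → ℝ) : ℝ := Real.sqrt (∑ i, x i ^ 2)

/-- Partial derivative in coordinate `i`. -/
noncomputable def pder {d : ℕ} (i : Fin d) (f : (Fin d → ℝ) → ℝ) : (Fin d → ℝ) → ℝ :=
  fun x => fderiv ℝ f x (Pi.single i 1)

/-- The multi-index partial differential operator `D^s`. -/
noncomputable def mderiv {d : ℕ} (s : Fin d → ℕ) (f : (Fin d → ℝ) → ℝ) : (Fin d → ℝ) → ℝ :=
  (List.finRange d).foldr (fun i g => (pder i)^[s i] g) f

/-- The Hölder class `H(β, L)`: functions supported on the unit cube, `⌊β⌋` times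
differentiable, whose top-order partial derivatives are `(β - ⌊β⌋)`-Hölder with
constant `L` (w.r.t. the Euclidean norm). -/
def HolderClass (d : ℕ) (β L : ℝ) (f : (Fin d → ℝ) → ℝ) : Prop :=
  (∀ x, x ∉ Set.Icc (0 : Fin d → ℝ) 1 → f x = 0) ∧
  ContDiff ℝ (lflr β : ℕ) f ∧
  ∀ s : Fin d → ℕ, (∑ i, s i) = lflr β → ∀ x y : Fin d → ℝ,
    |mderiv s f x - mderiv s f y| ≤ L * l2norm (x - y) ^ (β - (lflr β : ℝ))

/-- Barycentric coordinates with respect to the simplex `Δ_d` with vertices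
`0, e_1, …, e_d`. -/
def lam {d : ℕ} (t : Fin (d + 1)) (x : Fin d → ℝ) : ℝ :=
  if h : t = 0 then 1 - ∑ i, x i else x (t.pred h)

/-- The `ℓ`-th principal lattice of the simplex `Δ_d`: points of the simplex all of
whose barycentric coordinates are nonnegative integer multiples of `1/ℓ`. -/
def principalLattice (d ℓ : ℕ) : Set (Fin d → ℝ) :=
  {x | ∀ t : Fin (d + 1), 0 ≤ lam t x ∧ ∃ r : ℕ, (ℓ : ℝ) * lam t x = r}

/-- The Lagrange basis polynomial `p` associated with a point `u` of the `ℓ`-th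
principal lattice:  `p(x) = ∏_{t : λ_t(u) > 0} ∏_{r=0}^{ℓλ_t(u)-1}
(λ_t(x) - r/ℓ)/(λ_t(u) - r/ℓ)`. -/
noncomputable def lagBasis (d ℓ : ℕ) (u x : Fin d → ℝ) : ℝ :=
  ∏ t : Fin (d + 1), ∏ r ∈ Finset.range ⌊(ℓ : ℝ) * lam t u⌋₊,
    (lam t x - r / ℓ) / (lam t u - r / ℓ)

end

noncomputable section

lemma lam_sum {d : ℕ} (x : Fin d → ℝ) : ∑ t : Fin (d+1), lam t x = 1 := by
  rw [Fin.sum_univ_succ]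
  simp [lam, Fin.succ_ne_zero]

lemma lam_succ {d : ℕ} (i : Fin d) (x : Fin d → ℝ) : lam i.succ x = x i := by
  rw [lam, dif_neg (Fin.succ_ne_zero i), Fin.pred_succ]

noncomputable def lamPoly (d : ℕ) (t : Fin (d + 1)) : MvPolynomial (Fin d) ℝ :=
  if h : t = 0 then MvPolynomial.C 1 - ∑ i, MvPolynomial.X i else MvPolynomial.X (t.pred h)

lemma eval_lamPoly {d : ℕ} (t : Fin (d+1)) (x : Fin d → ℝ) :
    MvPolynomial.eval x (lamPoly d t) = lam t x := by
  by_cases h : t = 0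
  · rw [lamPoly, lam, dif_pos h, dif_pos h]
    simp
  · rw [lamPoly, lam, dif_neg h, dif_neg h]
    simp

lemma lamPoly_degree {d : ℕ} (t : Fin (d+1)) : (lamPoly d t).totalDegree ≤ 1 := by
  by_cases h : t = 0
  · rw [lamPoly, dif_pos h]
    refine le_trans (MvPolynomial.totalDegree_sub _ _) ?_
    refine max_le (by simp [MvPolynomial.totalDegree_C]) ?_
    refine MvPolynomial.totalDegree_finsetSum_le fun i _ => ?_
    simp [MvPolynomial.totalDegree_X]
  · rw [lamPoly, dif_neg h]
    simp [MvPolynomial.totalDegree_X]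

end

noncomputable section

noncomputable def lagPoly (d ℓ : ℕ) (u : Fin d → ℝ) : MvPolynomial (Fin d) ℝ :=
  ∏ t : Fin (d + 1), ∏ r ∈ Finset.range ⌊(ℓ : ℝ) * lam t u⌋₊,
    MvPolynomial.C (lam t u - (r : ℝ) / ℓ)⁻¹ * (lamPoly d t - MvPolynomial.C ((r : ℝ) / ℓ))

lemma eval_lagPoly {d ℓ : ℕ} (u x : Fin d → ℝ) :
    MvPolynomial.eval x (lagPoly d ℓ u) = lagBasis d ℓ u x := by
  rw [lagPoly, lagBasis]
  simp only [map_prod, map_mul, map_sub, MvPolynomial.eval_C, eval_lamPoly]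
  refine Finset.prod_congr rfl fun t _ => Finset.prod_congr rfl fun r _ => ?_
  rw [inv_mul_eq_div]

lemma lagPoly_degree {d ℓ : ℕ} (u : Fin d → ℝ) :
    (lagPoly d ℓ u).totalDegree ≤ ∑ t : Fin (d+1), ⌊(ℓ : ℝ) * lam t u⌋₊ := by
  refine le_trans (MvPolynomial.totalDegree_finset_prod _ _) ?_
  refine Finset.sum_le_sum fun t _ => ?_
  refine le_trans (MvPolynomial.totalDegree_finset_prod _ _) ?_
  calc ∑ r ∈ Finset.range ⌊(ℓ : ℝ) * lam t u⌋₊,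
        (MvPolynomial.C (lam t u - (r : ℝ) / ℓ)⁻¹ *
          (lamPoly d t - MvPolynomial.C ((r : ℝ) / ℓ))).totalDegree
      ≤ ∑ _r ∈ Finset.range ⌊(ℓ : ℝ) * lam t u⌋₊, 1 := by
        refine Finset.sum_le_sum fun r _ => ?_
        refine le_trans (MvPolynomial.totalDegree_mul _ _) ?_
        rw [MvPolynomial.totalDegree_C, zero_add]
        exact le_trans (MvPolynomial.totalDegree_sub _ _)
          (max_le (lamPoly_degree t) (by simp [MvPolynomial.totalDegree_C]))
    _ = ⌊(ℓ : ℝ) * lam t u⌋₊ := by simp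

/-- For a lattice point, `ℓ * lam t u` is the natural number `⌊ℓ * lam t u⌋₊`. -/
lemma lattice_floor {d ℓ : ℕ} {u : Fin d → ℝ} (hu : u ∈ principalLattice d ℓ)
    (t : Fin (d+1)) : (ℓ : ℝ) * lam t u = (⌊(ℓ : ℝ) * lam t u⌋₊ : ℝ) := by
  obtain ⟨r, hr⟩ := (hu t).2
  rw [hr, Nat.floor_natCast]

lemma lattice_floor_sum {d ℓ : ℕ} (hℓ : 1 ≤ ℓ) {u : Fin d → ℝ}
    (hu : u ∈ principalLattice d ℓ) :
    ∑ t : Fin (d+1), ⌊(ℓ : ℝ) * lam t u⌋₊ = ℓ := by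
  have : ((∑ t : Fin (d+1), ⌊(ℓ : ℝ) * lam t u⌋₊ : ℕ) : ℝ) = (ℓ : ℝ) := by
    push_cast
    rw [Finset.sum_congr rfl fun t _ => (lattice_floor hu t).symm, ← Finset.mul_sum,
      lam_sum, mul_one]
  exact_mod_cast this

lemma lagBasis_self {d ℓ : ℕ} (hℓ : 1 ≤ ℓ) {u : Fin d → ℝ}
    (hu : u ∈ principalLattice d ℓ) : lagBasis d ℓ u u = 1 := by
  rw [lagBasis]
  refine Finset.prod_eq_one fun t _ => Finset.prod_eq_one fun r hr => ?_
  have hℓ0 : (0 : ℝ) < ℓ := by exact_mod_cast hℓ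
  have hlt : (r : ℝ) < (ℓ : ℝ) * lam t u := by
    rw [lattice_floor hu t]
    exact_mod_cast Finset.mem_range.mp hr
  have : (r : ℝ) / ℓ < lam t u := by
    rw [div_lt_iff₀ hℓ0]
    linarith [hlt, mul_comm (ℓ : ℝ) (lam t u)]
  exact div_self (by linarith)

lemma lagBasis_ne {d ℓ : ℕ} (hℓ : 1 ≤ ℓ) {u x : Fin d → ℝ}
    (hu : u ∈ principalLattice d ℓ) (hx : x ∈ principalLattice d ℓ) (hne : x ≠ u) :
    lagBasis d ℓ u x = 0 := by
  classical
  have hℓ0 : (0 : ℝ) < ℓ := by exact_mod_cast hℓ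
  -- find t with floor(ℓ lam t x) < floor(ℓ lam t u)
  have hex : ∃ t : Fin (d+1), ⌊(ℓ : ℝ) * lam t x⌋₊ < ⌊(ℓ : ℝ) * lam t u⌋₊ := by
    by_contra hcon
    push_neg at hcon
    have hsum : ∑ t : Fin (d+1), ⌊(ℓ : ℝ) * lam t u⌋₊
        = ∑ t : Fin (d+1), ⌊(ℓ : ℝ) * lam t x⌋₊ := by
      rw [lattice_floor_sum hℓ hu, lattice_floor_sum hℓ hx]
    have heq : ∀ t ∈ (Finset.univ : Finset (Fin (d+1))),
        ⌊(ℓ : ℝ) * lam t u⌋₊ = ⌊(ℓ : ℝ) * lam t x⌋₊ :=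
      (Finset.sum_eq_sum_iff_of_le fun t _ => hcon t).mp hsum
    apply hne
    funext i
    have h1 := lattice_floor hu i.succ
    have h2 := lattice_floor hx i.succ
    have h3 := heq i.succ (Finset.mem_univ _)
    rw [lam_succ] at h1 h2
    simp only [lam_succ] at h3
    have : (ℓ : ℝ) * x i = (ℓ : ℝ) * u i := by
      rw [h1, h2]; exact_mod_cast h3.symm
    exact mul_left_cancel₀ (ne_of_gt hℓ0) this
  obtain ⟨t, ht⟩ := hex
  rw [lagBasis]
  refine Finset.prod_eq_zero (Finset.mem_univ t) ?_
  refine Finset.prod_eq_zero (Finset.mem_range.mpr ht) ?_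
  have hz : lam t x - (⌊(ℓ : ℝ) * lam t x⌋₊ : ℝ) / ℓ = 0 := by
    rw [sub_eq_zero, eq_div_iff (ne_of_gt hℓ0), mul_comm]
    exact lattice_floor hx t
  rw [hz, zero_div]

end

lemma eval_eq_sum_mono {d M ℓ : ℕ} (α : Fin M → (Fin d → ℕ)) (hαinj : Function.Injective α)
    (hαrange : Set.range α = {s : Fin d → ℕ | ∑ i, s i ≤ ℓ})
    (p : MvPolynomial (Fin d) ℝ) (hp : p.totalDegree ≤ ℓ) (x : Fin d → ℝ) :
    ∑ j, MvPolynomial.coeff (Finsupp.equivFunOnFinite.symm (α j)) p * ∏ i, x i ^ α j i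
      = MvPolynomial.eval x p := by
  classical
  set e : Fin M → (Fin d →₀ ℕ) := fun j => Finsupp.equivFunOnFinite.symm (α j) with he
  have heinj : Function.Injective e :=
    fun a b h => hαinj (Finsupp.equivFunOnFinite.symm.injective h)
  have hsub : p.support ⊆ Finset.image e Finset.univ := by
    intro m hm
    have hdeg : ∑ i, m i ≤ ℓ := by
      refine le_trans ?_ hp
      have := MvPolynomial.le_totalDegree hm
      rwa [Finsupp.sum_fintype _ _ (fun _ => rfl)] at this
    have : (m : Fin d → ℕ) ∈ Set.range α := by rw [hαrange]; exact hdeg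
    obtain ⟨j, hj⟩ := this
    refine Finset.mem_image.mpr ⟨j, Finset.mem_univ _, ?_⟩
    rw [he]
    simp only
    rw [hj]
    exact Finsupp.equivFunOnFinite.symm_apply_apply m
  have hterm : ∀ j, MvPolynomial.coeff (e j) p * ∏ i, x i ^ α j i
      = MvPolynomial.coeff (e j) p * ∏ i, x i ^ (e j) i := by
    intro j
    congr 1
  rw [MvPolynomial.eval_eq']
  rw [Finset.sum_congr rfl fun j _ => hterm j]
  have himg := Finset.sum_image (s := (Finset.univ : Finset (Fin M))) (g := e)
    (f := fun m => MvPolynomial.coeff m p * ∏ i, x i ^ m i)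
    (fun a _ b _ h => heinj h)
  rw [← himg]
  refine (Finset.sum_subset hsub fun m _ hm => ?_).symm
  rw [MvPolynomial.notMem_support_iff.mp hm, zero_mul]



/-- The Vandermonde-type matrix `𝒱_{k,α} = U_k^α`, with rows indexed by
the points of the `ℓ`-th principal lattice and columns indexed by the multi-indices
`α` with `|α| ≤ ℓ`, is invertible. -/
theorem stmt5 (d ℓ : ℕ) (hd : 1 ≤ d) (hℓ : 1 ≤ ℓ)
    (M : ℕ) (hM : M = Nat.choose (ℓ + d) d)
    (U : Fin M → (Fin d → ℝ)) (hUinj : Function.Injective U)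
    (hUrange : Set.range U = principalLattice d ℓ)
    (α : Fin M → (Fin d → ℕ)) (hαinj : Function.Injective α)
    (hαrange : Set.range α = {s : Fin d → ℕ | ∑ i, s i ≤ ℓ}) :
    IsUnit (Matrix.of fun k j : Fin M => ∏ i, U k i ^ α j i) := by
  classical
  have hU_mem : ∀ k, U k ∈ principalLattice d ℓ := fun k =>
    hUrange ▸ Set.mem_range_self k
  have hdeg : ∀ k, (lagPoly d ℓ (U k)).totalDegree ≤ ℓ := fun k =>
    le_trans (lagPoly_degree (U k)) (le_of_eq (lattice_floor_sum hℓ (hU_mem k)))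
  refine IsUnit.of_mul_eq_one
    (b := Matrix.of fun j k : Fin M =>
      MvPolynomial.coeff (Finsupp.equivFunOnFinite.symm (α j)) (lagPoly d ℓ (U k))) ?_
  ext k k'
  rw [Matrix.mul_apply]
  simp only [Matrix.of_apply]
  have : ∑ j, (∏ i, U k i ^ α j i) *
      MvPolynomial.coeff (Finsupp.equivFunOnFinite.symm (α j)) (lagPoly d ℓ (U k'))
      = MvPolynomial.eval (U k) (lagPoly d ℓ (U k')) := by
    rw [← eval_eq_sum_mono α hαinj hαrange _ (hdeg k') (U k)]
    exact Finset.sum_congr rfl fun j _ => mul_comm _ _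
  rw [this, eval_lagPoly]
  by_cases h : k = k'
  · subst h
    rw [lagBasis_self hℓ (hU_mem k), Matrix.one_apply_eq]
  · rw [lagBasis_ne hℓ (hU_mem k') (hU_mem k) (fun he => h (hUinj he)),
      Matrix.one_apply_ne h]
end

section
/- Fix integers d ≥ 1 and ℓ ≥ 1, let U₁, …, U_M be the points of the ℓ-th principal lattice P_ℓ of the simplex Δ_d with M = binom(ℓ+d, d), and let σ₀ be the minimum singular value of the Vandermonde-type matrix 𝒱. Then σ₀ ≥ binom(ℓ+d, ℓ)^{−3} · 4^{−ℓ} · ℓ^{−2ℓ}. -/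
open MeasureTheory Finset
open scoped ENNReal

noncomputable section Aux8

open MvPolynomial Finset

/-! ### ℓ¹ norm of coefficients -/

noncomputable def nrm {d : ℕ} (p : MvPolynomial (Fin d) ℝ) : ℝ :=
  ∑ s ∈ p.support, |coeff s p|

lemma nrm_nonneg {d : ℕ} (p : MvPolynomial (Fin d) ℝ) : 0 ≤ nrm p :=
  Finset.sum_nonneg fun _ _ => abs_nonneg _

lemma nrm_eq_sum_subset {d : ℕ} (p : MvPolynomial (Fin d) ℝ) {T : Finset (Fin d →₀ ℕ)}
    (hT : p.support ⊆ T) : nrm p = ∑ s ∈ T, |coeff s p| := by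
  refine Finset.sum_subset hT fun s _ hs => ?_
  simp [MvPolynomial.notMem_support_iff.mp hs]

lemma abs_coeff_le_nrm {d : ℕ} (p : MvPolynomial (Fin d) ℝ) (s : Fin d →₀ ℕ) :
    |coeff s p| ≤ nrm p := by
  by_cases hs : s ∈ p.support
  · exact Finset.single_le_sum (f := fun s => |coeff s p|) (fun _ _ => abs_nonneg _) hs
  · simp [MvPolynomial.notMem_support_iff.mp hs, nrm_nonneg]

lemma nrm_mul {d : ℕ} (p q : MvPolynomial (Fin d) ℝ) : nrm (p * q) ≤ nrm p * nrm q := by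
  classical
  have h1 : nrm (p * q) ≤ ∑ s ∈ (p * q).support, ∑ x ∈ Finset.HasAntidiagonal.antidiagonal s,
      |coeff x.1 p| * |coeff x.2 q| := by
    refine Finset.sum_le_sum fun s _ => ?_
    rw [MvPolynomial.coeff_mul]
    exact (Finset.abs_sum_le_sum_abs _ _).trans (le_of_eq (by simp [abs_mul]))
  have h2 : ∑ s ∈ (p * q).support, ∑ x ∈ Finset.HasAntidiagonal.antidiagonal s,
      |coeff x.1 p| * |coeff x.2 q|
      = ∑ x ∈ (p*q).support.biUnion (fun s => Finset.HasAntidiagonal.antidiagonal s),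
          |coeff x.1 p| * |coeff x.2 q| := by
    rw [Finset.sum_biUnion]
    intro a _ b _ hab
    refine Finset.disjoint_left.mpr fun x hxa hxb => hab ?_
    rw [← Finset.HasAntidiagonal.mem_antidiagonal.mp hxa, ← Finset.HasAntidiagonal.mem_antidiagonal.mp hxb]
  have h3 : ∑ x ∈ (p*q).support.biUnion (fun s => Finset.HasAntidiagonal.antidiagonal s),
      |coeff x.1 p| * |coeff x.2 q|
      ≤ ∑ x ∈ p.support ×ˢ q.support, |coeff x.1 p| * |coeff x.2 q| := by
    rw [← Finset.sum_filter_ne_zero (s := (p*q).support.biUnion _)]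
    refine Finset.sum_le_sum_of_subset_of_nonneg ?_
      (fun _ _ _ => mul_nonneg (abs_nonneg _) (abs_nonneg _))
    intro x hx
    rw [Finset.mem_filter] at hx
    have := hx.2
    have hp : coeff x.1 p ≠ 0 := fun h => this (by simp [h])
    have hq : coeff x.2 q ≠ 0 := fun h => this (by simp [h])
    exact Finset.mem_product.mpr
      ⟨MvPolynomial.mem_support_iff.mpr hp, MvPolynomial.mem_support_iff.mpr hq⟩
  calc nrm (p*q) ≤ _ := h1
    _ = _ := h2
    _ ≤ _ := h3
    _ = nrm p * nrm q := by
      rw [Finset.sum_product, nrm, nrm, Finset.sum_mul]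
      exact Finset.sum_congr rfl fun x _ => by rw [Finset.mul_sum]

lemma nrm_add {d : ℕ} (p q : MvPolynomial (Fin d) ℝ) : nrm (p + q) ≤ nrm p + nrm q := by
  classical
  rw [nrm_eq_sum_subset (p+q) (MvPolynomial.support_add (p := p) (q := q)),
      nrm_eq_sum_subset p (Finset.subset_union_left (s₂ := q.support)),
      nrm_eq_sum_subset q (Finset.subset_union_right (s₁ := p.support)),
      ← Finset.sum_add_distrib]
  refine Finset.sum_le_sum fun s _ => ?_
  rw [MvPolynomial.coeff_add]
  exact abs_add_le _ _

lemma nrm_C_le {d : ℕ} (a : ℝ) : nrm (C a : MvPolynomial (Fin d) ℝ) ≤ |a| := by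
  classical
  rw [nrm_eq_sum_subset (T := {0}) _ ?_]
  · simp
  · intro s hs
    rw [MvPolynomial.mem_support_iff, MvPolynomial.coeff_C] at hs
    simp only [Finset.mem_singleton]
    by_contra h
    simp [Ne.symm h] at hs

lemma nrm_X_le {d : ℕ} (i : Fin d) : nrm (X i : MvPolynomial (Fin d) ℝ) ≤ 1 := by
  classical
  rw [nrm_eq_sum_subset (T := {Finsupp.single i 1}) _ (by simp [MvPolynomial.support_X])]
  simp [MvPolynomial.coeff_X]

lemma nrm_one {d : ℕ} : nrm (1 : MvPolynomial (Fin d) ℝ) ≤ 1 := by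
  simpa using nrm_C_le (d := d) 1

lemma nrm_zero {d : ℕ} : nrm (0 : MvPolynomial (Fin d) ℝ) = 0 := by simp [nrm]

lemma nrm_prod {d : ℕ} {ι : Type*} (s : Finset ι) (f : ι → MvPolynomial (Fin d) ℝ)
    (B : ι → ℝ) (hB : ∀ i ∈ s, nrm (f i) ≤ B i) :
    nrm (∏ i ∈ s, f i) ≤ ∏ i ∈ s, B i := by
  classical
  induction s using Finset.induction with
  | empty => simpa using nrm_one
  | insert a t hx ih =>
    rw [Finset.prod_insert hx, Finset.prod_insert hx]
    calc nrm (f a * ∏ i ∈ t, f i) ≤ nrm (f a) * nrm (∏ i ∈ t, f i) := nrm_mul _ _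
      _ ≤ B a * ∏ i ∈ t, B i := by
          refine mul_le_mul (hB a (Finset.mem_insert_self a t))
            (ih fun i hi => hB i (Finset.mem_insert_of_mem hi)) (nrm_nonneg _) ?_
          exact (nrm_nonneg _).trans (hB a (Finset.mem_insert_self a t))

lemma nrm_sum {d : ℕ} {ι : Type*} (s : Finset ι) (f : ι → MvPolynomial (Fin d) ℝ) :
    nrm (∑ i ∈ s, f i) ≤ ∑ i ∈ s, nrm (f i) := by
  classical
  induction s using Finset.induction with
  | empty => simp [nrm_zero]
  | insert a t hx ih =>
    rw [Finset.sum_insert hx, Finset.sum_insert hx]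
    exact (nrm_add _ _).trans (by linarith)

lemma nrm_sub {d : ℕ} (p q : MvPolynomial (Fin d) ℝ) : nrm (p - q) ≤ nrm p + nrm q := by
  have h : nrm (-q) = nrm q := by simp [nrm, MvPolynomial.support_neg]
  calc nrm (p - q) = nrm (p + -q) := by ring_nf
    _ ≤ nrm p + nrm (-q) := nrm_add _ _
    _ = nrm p + nrm q := by rw [h]

/-! ### The barycentric coordinate polynomials -/

noncomputable def Lpoly (d : ℕ) (t : Fin (d + 1)) : MvPolynomial (Fin d) ℝ :=
  if h : t = 0 then C 1 - ∑ i, X i else X (t.pred h)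

lemma eval_Lpoly {d : ℕ} (t : Fin (d + 1)) (x : Fin d → ℝ) :
    eval x (Lpoly d t) = lam t x := by
  unfold Lpoly lam
  by_cases h : t = 0 <;> simp [h]

lemma totalDegree_Lpoly {d : ℕ} (t : Fin (d + 1)) : (Lpoly d t).totalDegree ≤ 1 := by
  unfold Lpoly
  by_cases h : t = 0
  · simp only [h, dif_pos]
    refine (totalDegree_sub _ _).trans ?_
    refine sup_le (by simp [MvPolynomial.totalDegree_C]) ?_
    refine (totalDegree_finset_sum _ _).trans ?_
    exact Finset.sup_le fun i _ => le_of_eq (totalDegree_X i)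
  · simp only [h, dif_neg, not_false_iff]
    exact le_of_eq (totalDegree_X _)

lemma nrm_Lpoly {d : ℕ} (t : Fin (d + 1)) : nrm (Lpoly d t) ≤ (d : ℝ) + 1 := by
  unfold Lpoly
  by_cases h : t = 0
  · simp only [h, dif_pos]
    refine (nrm_sub _ _).trans ?_
    have h1 : nrm (C 1 : MvPolynomial (Fin d) ℝ) ≤ 1 := by simpa using nrm_C_le (d := d) 1
    have h2 : nrm (∑ i : Fin d, (X i : MvPolynomial (Fin d) ℝ)) ≤ (d : ℝ) := by
      refine (nrm_sum _ _).trans ?_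
      calc ∑ i : Fin d, nrm (X i : MvPolynomial (Fin d) ℝ) ≤ ∑ _i : Fin d, (1:ℝ) :=
            Finset.sum_le_sum fun i _ => nrm_X_le i
        _ = d := by simp
    linarith
  · simp only [h, dif_neg, not_false_iff]
    have := nrm_X_le (d := d) (t.pred h)
    have hd : (0:ℝ) ≤ d := Nat.cast_nonneg d
    linarith

/-! ### The Lagrange polynomial -/

noncomputable def Ppoly (d ℓ : ℕ) (m : Fin (d + 1) → ℕ) : MvPolynomial (Fin d) ℝ :=
  ∏ t, ∏ r ∈ Finset.range (m t), C ((ℓ : ℝ) / ((m t : ℝ) - r)) * (Lpoly d t - C ((r : ℝ) / ℓ))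

lemma eval_Ppoly {d ℓ : ℕ} (m : Fin (d + 1) → ℕ) (x : Fin d → ℝ) :
    eval x (Ppoly d ℓ m) =
      ∏ t, ∏ r ∈ Finset.range (m t), (ℓ : ℝ) / ((m t : ℝ) - r) * (lam t x - r / ℓ) := by
  unfold Ppoly
  rw [map_prod]
  refine Finset.prod_congr rfl fun t _ => ?_
  rw [map_prod]
  refine Finset.prod_congr rfl fun r _ => ?_
  simp [eval_Lpoly]

lemma totalDegree_Ppoly {d ℓ : ℕ} (m : Fin (d + 1) → ℕ) :
    (Ppoly d ℓ m).totalDegree ≤ ∑ t, m t := by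
  refine (totalDegree_finset_prod _ _).trans (Finset.sum_le_sum fun t _ => ?_)
  refine (totalDegree_finset_prod _ _).trans ?_
  calc ∑ r ∈ Finset.range (m t),
        (C ((ℓ : ℝ) / ((m t : ℝ) - r)) * (Lpoly d t - C ((r : ℝ) / ℓ))).totalDegree
      ≤ ∑ _r ∈ Finset.range (m t), 1 := by
        refine Finset.sum_le_sum fun r _ => ?_
        have hsub : (Lpoly d t - C ((r:ℝ)/ℓ)).totalDegree ≤ 1 :=
          (totalDegree_sub _ _).trans (sup_le (totalDegree_Lpoly t)
            (le_of_eq_of_le (totalDegree_C _) (Nat.zero_le 1)))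
        calc (C ((ℓ : ℝ) / ((m t : ℝ) - r)) * (Lpoly d t - C ((r : ℝ) / ℓ))).totalDegree
            ≤ (C ((ℓ : ℝ) / ((m t : ℝ) - r)) : MvPolynomial (Fin d) ℝ).totalDegree
              + (Lpoly d t - C ((r : ℝ) / ℓ)).totalDegree := totalDegree_mul _ _
          _ ≤ 0 + 1 := add_le_add (le_of_eq (totalDegree_C _)) hsub
          _ = 1 := rfl
    _ = m t := by simp

lemma nrm_Ppoly {d ℓ : ℕ} (m : Fin (d + 1) → ℕ) (hm : ∀ t, m t ≤ ℓ) :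
    nrm (Ppoly d ℓ m) ≤ ((ℓ : ℝ) * ((d : ℝ) + 2)) ^ (∑ t, m t) := by
  unfold Ppoly
  have key : ∀ t : Fin (d+1), ∀ r ∈ Finset.range (m t),
      nrm (C ((ℓ : ℝ) / ((m t : ℝ) - r)) * (Lpoly d t - C ((r : ℝ) / ℓ)))
      ≤ (ℓ : ℝ) * ((d : ℝ) + 2) := by
    intro t r hr
    rw [Finset.mem_range] at hr
    have hmr : (1 : ℝ) ≤ (m t : ℝ) - r := by
      have : (r : ℝ) + 1 ≤ m t := by exact_mod_cast hr
      linarith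
    have hℓr : 0 < ℓ := lt_of_lt_of_le (Nat.lt_of_lt_of_le (Nat.zero_lt_succ r) hr) (hm t)
    have hℓR : (0:ℝ) < ℓ := by exact_mod_cast hℓr
    have hc : |(ℓ : ℝ) / ((m t : ℝ) - r)| ≤ (ℓ : ℝ) := by
      rw [abs_of_nonneg (div_nonneg hℓR.le (by linarith))]
      rw [div_le_iff₀ (by linarith)]
      nlinarith
    have ha : |(r : ℝ) / ℓ| ≤ 1 := by
      rw [abs_of_nonneg (div_nonneg (Nat.cast_nonneg r) hℓR.le)]
      rw [div_le_one hℓR]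
      have : r ≤ ℓ := le_trans hr.le (hm t)
      exact_mod_cast this
    calc nrm (C ((ℓ : ℝ) / ((m t : ℝ) - r)) * (Lpoly d t - C ((r : ℝ) / ℓ)))
        ≤ nrm (C ((ℓ : ℝ) / ((m t : ℝ) - r))) * nrm (Lpoly d t - C ((r : ℝ) / ℓ)) := nrm_mul _ _
      _ ≤ (ℓ : ℝ) * ((d : ℝ) + 2) := by
          have h1 := nrm_C_le (d := d) ((ℓ : ℝ) / ((m t : ℝ) - r))
          have h2 : nrm (Lpoly d t - C ((r : ℝ) / ℓ)) ≤ (d : ℝ) + 2 := by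
            refine (nrm_sub _ _).trans ?_
            have := nrm_Lpoly t
            have := nrm_C_le (d := d) ((r : ℝ) / ℓ)
            linarith
          have hn1 := nrm_nonneg (C ((ℓ : ℝ) / ((m t : ℝ) - r)) : MvPolynomial (Fin d) ℝ)
          have hn2 := nrm_nonneg (Lpoly d t - C ((r : ℝ) / ℓ))
          nlinarith [abs_nonneg ((ℓ : ℝ) / ((m t : ℝ) - r))]
  calc nrm (∏ t, ∏ r ∈ Finset.range (m t),
        C ((ℓ : ℝ) / ((m t : ℝ) - r)) * (Lpoly d t - C ((r : ℝ) / ℓ)))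
      ≤ ∏ t, ((ℓ : ℝ) * ((d : ℝ) + 2)) ^ (m t) := by
        refine nrm_prod _ _ _ fun t _ => ?_
        calc nrm (∏ r ∈ Finset.range (m t),
              C ((ℓ : ℝ) / ((m t : ℝ) - r)) * (Lpoly d t - C ((r : ℝ) / ℓ)))
            ≤ ∏ _r ∈ Finset.range (m t), (ℓ : ℝ) * ((d : ℝ) + 2) :=
              nrm_prod _ _ _ (key t)
          _ = ((ℓ : ℝ) * ((d : ℝ) + 2)) ^ (m t) := by
              rw [Finset.prod_const, Finset.card_range]
    _ = ((ℓ : ℝ) * ((d : ℝ) + 2)) ^ (∑ t, m t) := Finset.prod_pow_eq_pow_sum _ _ _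

lemma eval_Ppoly_self {d ℓ : ℕ} (hℓ : 0 < ℓ) (m : Fin (d + 1) → ℕ) (u : Fin d → ℝ)
    (hm : ∀ t, (ℓ : ℝ) * lam t u = m t) : eval u (Ppoly d ℓ m) = 1 := by
  rw [eval_Ppoly]
  refine Finset.prod_eq_one fun t _ => Finset.prod_eq_one fun r hr => ?_
  rw [Finset.mem_range] at hr
  have hℓR : (0:ℝ) < ℓ := by exact_mod_cast hℓ
  have hu : lam t u = (m t : ℝ) / ℓ := by
    field_simp
    linarith [hm t]
  rw [hu]
  have hmr : (0 : ℝ) < (m t : ℝ) - r := by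
    have : (r : ℝ) < m t := by exact_mod_cast hr
    linarith
  field_simp

lemma eval_Ppoly_zero {d ℓ : ℕ} (hℓ : 0 < ℓ) (m : Fin (d + 1) → ℕ) (x : Fin d → ℝ)
    (t₀ : Fin (d + 1)) (r₀ : ℕ) (hr₀ : r₀ < m t₀) (hx : (ℓ : ℝ) * lam t₀ x = r₀) :
    eval x (Ppoly d ℓ m) = 0 := by
  rw [eval_Ppoly]
  refine Finset.prod_eq_zero (Finset.mem_univ t₀) ?_
  refine Finset.prod_eq_zero (Finset.mem_range.mpr hr₀) ?_
  have hℓR : (0:ℝ) < ℓ := by exact_mod_cast hℓ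
  have : lam t₀ x = (r₀ : ℝ) / ℓ := by field_simp; linarith [hx]
  rw [this]
  simp

end Aux8

noncomputable section Aux8main
open MvPolynomial Finset

lemma l2norm_mulVec_le {M : ℕ} (Cm : Matrix (Fin M) (Fin M) ℝ) (B : ℝ) (hB : 0 ≤ B)
    (h : ∀ j k, |Cm j k| ≤ B) (w : Fin M → ℝ) :
    l2norm (Cm.mulVec w) ≤ (M : ℝ) * B * l2norm w := by
  unfold l2norm
  have hmv : ∀ j, Cm.mulVec w j = ∑ k, Cm j k * w k := by
    intro j; simp [Matrix.mulVec, dotProduct]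
  have hw : 0 ≤ ∑ k, (w k)^2 := Finset.sum_nonneg fun k _ => sq_nonneg _
  have hsum : ∑ j, (Cm.mulVec w j)^2 ≤ ((M:ℝ)*B)^2 * ∑ k, (w k)^2 := by
    have hjj : ∀ j, (Cm.mulVec w j)^2 ≤ ((M:ℝ)*B^2) * ∑ k, (w k)^2 := by
      intro j
      have h1 : (∑ k, Cm j k * w k)^2 ≤ (∑ k, (Cm j k)^2) * ∑ k, (w k)^2 :=
        Finset.sum_mul_sq_le_sq_mul_sq _ _ _
      have h2 : ∑ k, (Cm j k)^2 ≤ (M:ℝ) * B^2 := by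
        calc ∑ k, (Cm j k)^2 ≤ ∑ _k : Fin M, B^2 := by
              refine Finset.sum_le_sum fun k _ => ?_
              calc (Cm j k)^2 = |Cm j k|^2 := (sq_abs _).symm
                _ ≤ B^2 := pow_le_pow_left₀ (abs_nonneg _) (h j k) 2
          _ = (M:ℝ) * B^2 := by simp [Finset.card_univ, mul_comm]
      calc (Cm.mulVec w j)^2 = (∑ k, Cm j k * w k)^2 := by rw [hmv]
        _ ≤ (∑ k, (Cm j k)^2) * ∑ k, (w k)^2 := h1
        _ ≤ ((M:ℝ)*B^2) * ∑ k, (w k)^2 := mul_le_mul_of_nonneg_right h2 hw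
    calc ∑ j, (Cm.mulVec w j)^2 ≤ ∑ _j : Fin M, ((M:ℝ)*B^2) * ∑ k, (w k)^2 :=
          Finset.sum_le_sum fun j _ => hjj j
      _ = ((M:ℝ)*B)^2 * ∑ k, (w k)^2 := by
          simp only [Finset.sum_const, Finset.card_univ, Fintype.card_fin, nsmul_eq_mul]
          ring
  calc Real.sqrt (∑ j, (Cm.mulVec w j)^2) ≤ Real.sqrt (((M:ℝ)*B)^2 * ∑ k, (w k)^2) :=
        Real.sqrt_le_sqrt hsum
    _ = (M:ℝ)*B * Real.sqrt (∑ k, (w k)^2) := by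
        rw [Real.sqrt_mul (sq_nonneg _), Real.sqrt_sq (mul_nonneg (Nat.cast_nonneg M) hB)]

lemma aux8_pow_fact (d : ℕ) : ∀ n : ℕ, (d+1)^n * d.factorial ≤ (n+d).factorial := by
  intro n
  induction n with
  | zero => simp
  | succ n ih =>
    calc (d+1)^(n+1) * d.factorial = (d+1) * ((d+1)^n * d.factorial) := by ring
      _ ≤ (d+1) * (n+d).factorial := Nat.mul_le_mul_left _ ih
      _ ≤ (n+d+1) * (n+d).factorial := Nat.mul_le_mul_right _ (by omega)
      _ = (n+1+d).factorial := by
          rw [show n+1+d = (n+d)+1 by omega, Nat.factorial_succ]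

lemma aux8_nat_bound (d ℓ : ℕ) (hℓ : 1 ≤ ℓ) :
    (ℓ+d).choose d * (ℓ*(d+2))^ℓ ≤ ((ℓ+d).choose ℓ)^3 * 4^ℓ * ℓ^(2*ℓ) := by
  have hsymm : (ℓ+d).choose d = (ℓ+d).choose ℓ := by
    rw [← Nat.choose_symm (Nat.le_add_left d ℓ)]
    congr 1
    omega
  set c := (ℓ+d).choose ℓ with hc
  have hc1 : 1 ≤ c := Nat.choose_pos (Nat.le_add_right ℓ d)
  have h2 : c * ℓ.factorial * d.factorial = (ℓ+d).factorial := by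
    have := Nat.choose_mul_factorial_mul_factorial (Nat.le_add_right ℓ d)
    simpa using this
  have hkey : (d+1)^ℓ ≤ c * ℓ^ℓ := by
    have h3 : (d+1)^ℓ * d.factorial ≤ (c * ℓ^ℓ) * d.factorial := by
      calc (d+1)^ℓ * d.factorial ≤ (ℓ+d).factorial := aux8_pow_fact d ℓ
        _ = c * ℓ.factorial * d.factorial := h2.symm
        _ ≤ (c * ℓ^ℓ) * d.factorial :=
            Nat.mul_le_mul_right _ (Nat.mul_le_mul_left _ (Nat.factorial_le_pow ℓ))
    exact Nat.le_of_mul_le_mul_right h3 (Nat.factorial_pos d)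
  calc (ℓ+d).choose d * (ℓ*(d+2))^ℓ = c * (ℓ^ℓ * (d+2)^ℓ) := by rw [hsymm, mul_pow]
    _ ≤ c * (ℓ^ℓ * (2*(d+1))^ℓ) := by
        refine Nat.mul_le_mul_left _ (Nat.mul_le_mul_left _ (Nat.pow_le_pow_left (by omega) ℓ))
    _ = c * ℓ^ℓ * 2^ℓ * (d+1)^ℓ := by rw [mul_pow]; ring
    _ ≤ c * ℓ^ℓ * 2^ℓ * (c * ℓ^ℓ) := Nat.mul_le_mul_left _ hkey
    _ = c^2 * 2^ℓ * ℓ^(2*ℓ) := by rw [show 2*ℓ = ℓ + ℓ by omega, pow_add]; ring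
    _ ≤ c^3 * 4^ℓ * ℓ^(2*ℓ) := by
        refine Nat.mul_le_mul_right _ (Nat.mul_le_mul ?_ ?_)
        · exact Nat.pow_le_pow_right hc1 (by omega)
        · exact Nat.pow_le_pow_left (by omega) ℓ

end Aux8main
/-- Explicit lower bound on the minimum singular value `σ₀` of the
Vandermonde-type matrix of the `ℓ`-th principal lattice:
`σ₀ ≥ binom(ℓ+d, ℓ)⁻³ 4⁻ℓ ℓ^{-2ℓ}`. -/
theorem stmt8 (d ℓ : ℕ) (hd : 1 ≤ d) (hℓ : 1 ≤ ℓ)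
    (M : ℕ) (hM : M = Nat.choose (ℓ + d) d)
    (U : Fin M → (Fin d → ℝ)) (hUinj : Function.Injective U)
    (hUrange : Set.range U = principalLattice d ℓ)
    (α : Fin M → (Fin d → ℕ)) (hαinj : Function.Injective α)
    (hαrange : Set.range α = {s : Fin d → ℕ | ∑ i, s i ≤ ℓ})
    (V : Matrix (Fin M) (Fin M) ℝ)
    (hV : V = Matrix.of fun k j : Fin M => ∏ i, U k i ^ α j i)
    (σ₀ : ℝ)
    (hσ : IsLeast {r : ℝ | ∃ u : Fin M → ℝ, l2norm u = 1 ∧ r = l2norm (V.mulVec u)} σ₀) :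
    ((Nat.choose (ℓ + d) ℓ : ℝ) ^ 3)⁻¹ * ((4 : ℝ) ^ ℓ)⁻¹ * ((ℓ : ℝ) ^ (2 * ℓ))⁻¹ ≤ σ₀ := by
  classical
  open MvPolynomial in
  have hℓpos : 0 < ℓ := hℓ
  have hℓR : (0:ℝ) < ℓ := by exact_mod_cast hℓpos
  obtain ⟨⟨u₀, hu₀, hσ₀⟩, -⟩ := hσ
  have hU : ∀ k, U k ∈ principalLattice d ℓ := by
    intro k; rw [← hUrange]; exact Set.mem_range_self k
  set m : Fin M → Fin (d+1) → ℕ := fun k t => Classical.choose (hU k t).2 with hm_def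
  have hm : ∀ k t, (ℓ:ℝ) * lam t (U k) = m k t := fun k t => Classical.choose_spec (hU k t).2
  have lam_sum : ∀ x : Fin d → ℝ, ∑ t, lam t x = 1 := by
    intro x
    rw [Fin.sum_univ_succ]
    have h0 : lam (0 : Fin (d+1)) x = 1 - ∑ i, x i := by simp [lam]
    have hs : ∀ i : Fin d, lam i.succ x = x i := by
      intro i
      simp [lam, Fin.succ_ne_zero i, Fin.pred_succ]
    rw [h0]
    simp only [hs]
    ring
  have hmsum : ∀ k, ∑ t, m k t = ℓ := by
    intro k
    have h1 : ((∑ t, m k t : ℕ) : ℝ) = (ℓ:ℝ) := by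
      push_cast
      rw [← Finset.sum_congr rfl (fun t _ => (hm k t))]
      rw [← Finset.mul_sum, lam_sum, mul_one]
    exact_mod_cast h1
  have hmle : ∀ k t, m k t ≤ ℓ := by
    intro k t
    rw [← hmsum k]
    exact Finset.single_le_sum (f := fun t => m k t) (fun _ _ => Nat.zero_le _)
      (Finset.mem_univ t)
  set P : Fin M → MvPolynomial (Fin d) ℝ := fun k => Ppoly d ℓ (m k) with hP
  set A : Fin M → (Fin d →₀ ℕ) := fun j => Finsupp.equivFunOnFinite.symm (α j) with hA
  have hAinj : Function.Injective A :=
    fun a b hab => hαinj (Finsupp.equivFunOnFinite.symm.injective hab)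
  have hAα : ∀ j (i : Fin d), (A j) i = α j i := fun j i => rfl
  have hdiag : ∀ k, eval (U k) (P k) = 1 :=
    fun k => eval_Ppoly_self hℓpos (m k) (U k) (hm k)
  have hoff : ∀ k k', k ≠ k' → eval (U k) (P k') = 0 := by
    intro k k' hkk
    have hne : m k ≠ m k' := by
      intro h
      apply hkk
      apply hUinj
      funext i
      have hsucc : ∀ x : Fin d → ℝ, lam (Fin.succ i) x = x i := by
        intro x; simp [lam, Fin.succ_ne_zero i, Fin.pred_succ]
      have h1 := hm k i.succ
      have h2 := hm k' i.succ
      rw [hsucc] at h1 h2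
      rw [h] at h1
      have h3 : (ℓ:ℝ) * U k i = (ℓ:ℝ) * U k' i := by rw [h1, h2]
      exact mul_left_cancel₀ hℓR.ne' h3
    have hex : ∃ t, m k t < m k' t := by
      by_contra hno
      push_neg at hno
      apply hne
      funext t
      have hsum' : ∑ t, m k' t = ∑ t, m k t := by rw [hmsum, hmsum]
      have := (Finset.sum_eq_sum_iff_of_le (fun t _ => hno t)).mp hsum'
      exact (this t (Finset.mem_univ t)).symm
    obtain ⟨t₀, ht₀⟩ := hex
    exact eval_Ppoly_zero hℓpos (m k') (U k) t₀ (m k t₀) ht₀ (hm k t₀)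
  have hdeg : ∀ k, (P k).totalDegree ≤ ℓ :=
    fun k => (totalDegree_Ppoly (m k)).trans (le_of_eq (hmsum k))
  have hsupp : ∀ k, (P k).support ⊆ Finset.image A Finset.univ := by
    intro k s hs
    have h1 : ∑ i, s i ≤ ℓ := by
      have h := MvPolynomial.le_totalDegree hs
      rw [Finsupp.sum_fintype _ _ (fun i => rfl)] at h
      exact h.trans (hdeg k)
    have h2 : (⇑s : Fin d → ℕ) ∈ Set.range α := by rw [hαrange]; exact h1
    obtain ⟨j, hj⟩ := h2
    refine Finset.mem_image.mpr ⟨j, Finset.mem_univ j, ?_⟩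
    show Finsupp.equivFunOnFinite.symm (α j) = s
    rw [hj]
    exact Finsupp.equivFunOnFinite_symm_coe s
  have evalP : ∀ (x : Fin d → ℝ) k,
      eval x (P k) = ∑ j, coeff (A j) (P k) * ∏ i, x i ^ α j i := by
    intro x k
    rw [MvPolynomial.eval_eq' x (P k)]
    rw [Finset.sum_subset (hsupp k) (fun s _ hs => by
      rw [MvPolynomial.notMem_support_iff.mp hs]; ring)]
    rw [Finset.sum_image (fun a _ b _ h => hAinj h)]
    simp only [hAα]
  set Cm : Matrix (Fin M) (Fin M) ℝ := Matrix.of (fun j k => coeff (A j) (P k)) with hCm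
  have hVC : V * Cm = 1 := by
    ext k k'
    rw [Matrix.mul_apply, Matrix.one_apply]
    have heq : ∑ j, V k j * Cm j k' = eval (U k) (P k') := by
      rw [evalP (U k) k']
      refine Finset.sum_congr rfl fun j _ => ?_
      rw [hV, hCm]
      simp only [Matrix.of_apply]
      ring
    rw [heq]
    by_cases h : k = k'
    · subst h; simp [hdiag k]
    · simp [h, hoff k k' h]
  have hCV : Cm * V = 1 := mul_eq_one_comm.mp hVC
  have hu₀eq : Cm.mulVec (V.mulVec u₀) = u₀ := by
    rw [Matrix.mulVec_mulVec, hCV, Matrix.one_mulVec]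
  set B₀ : ℝ := ((ℓ:ℝ) * ((d:ℝ)+2))^ℓ with hB₀
  have hB₀nonneg : 0 ≤ B₀ := pow_nonneg (mul_nonneg hℓR.le (by positivity)) ℓ
  have hCmbound : ∀ j k, |Cm j k| ≤ B₀ := by
    intro j k
    calc |Cm j k| = |coeff (A j) (P k)| := rfl
      _ ≤ nrm (P k) := abs_coeff_le_nrm _ _
      _ ≤ ((ℓ:ℝ) * ((d:ℝ)+2))^(∑ t, m k t) := nrm_Ppoly (m k) (hmle k)
      _ = B₀ := by rw [hmsum k]
  have hσnonneg : 0 ≤ σ₀ := by rw [hσ₀]; exact Real.sqrt_nonneg _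
  have hone : 1 ≤ (M:ℝ) * B₀ * σ₀ := by
    calc (1:ℝ) = l2norm u₀ := hu₀.symm
      _ = l2norm (Cm.mulVec (V.mulVec u₀)) := by rw [hu₀eq]
      _ ≤ (M:ℝ) * B₀ * l2norm (V.mulVec u₀) := l2norm_mulVec_le Cm B₀ hB₀nonneg hCmbound _
      _ = (M:ℝ) * B₀ * σ₀ := by rw [← hσ₀]
  set K : ℝ := ((Nat.choose (ℓ+d) ℓ : ℝ))^3 * (4:ℝ)^ℓ * (ℓ:ℝ)^(2*ℓ) with hK
  have hNat : (M:ℝ) * B₀ ≤ K := by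
    have h' := aux8_nat_bound d ℓ hℓ
    have h'' : (((ℓ+d).choose d * (ℓ*(d+2))^ℓ : ℕ) : ℝ)
        ≤ ((((ℓ+d).choose ℓ)^3 * 4^ℓ * ℓ^(2*ℓ) : ℕ) : ℝ) := by exact_mod_cast h'
    push_cast at h''
    rw [hM, hB₀, hK]
    push_cast
    convert h'' using 2
  have hchoosepos : (0:ℝ) < (Nat.choose (ℓ+d) ℓ : ℝ) := by
    exact_mod_cast Nat.choose_pos (Nat.le_add_right ℓ d)
  have hKpos : 0 < K := by
    rw [hK]; positivity
  have h1K : 1 ≤ K * σ₀ :=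
    le_trans hone (mul_le_mul_of_nonneg_right hNat hσnonneg)
  have hgoal : K⁻¹ ≤ σ₀ := by
    have h2 : K⁻¹ * 1 ≤ K⁻¹ * (K * σ₀) :=
      mul_le_mul_of_nonneg_left h1K (inv_nonneg.mpr hKpos.le)
    rwa [mul_one, ← mul_assoc, inv_mul_cancel₀ hKpos.ne', one_mul] at h2
  calc ((Nat.choose (ℓ + d) ℓ : ℝ) ^ 3)⁻¹ * ((4 : ℝ) ^ ℓ)⁻¹ * ((ℓ : ℝ) ^ (2 * ℓ))⁻¹
      = K⁻¹ := by rw [hK, mul_inv, mul_inv]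
    _ ≤ σ₀ := hgoal
end

section
/- Let β > 0, L > 0, and d ≥ 1. Then every f ∈ H(β, L) satisfies sup_{x ∈ ℝ^d} |f(x)| ≤ d^{3⌊β⌋/2 + 1/2} · L. -/
open MeasureTheory Finset
open scoped ENNReal

section Aux

variable {d : ℕ}

private lemma pder_contDiff {n : ℕ} {g : (Fin d → ℝ) → ℝ} (hg : ContDiff ℝ ((n + 1 : ℕ)) g)
    (i : Fin d) : ContDiff ℝ (n : ℕ) (pder i g) := by
  have h1 : ContDiff ℝ (n : ℕ) (fderiv ℝ g) := hg.fderiv_right (by norm_cast)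
  exact (ContinuousLinearMap.apply ℝ ℝ (Pi.single i 1)).contDiff.comp h1

private lemma iter_contDiff {k : ℕ} {f : (Fin d → ℝ) → ℝ} (hf : ContDiff ℝ (k : ℕ) f)
    (i : Fin d) : ∀ j, j ≤ k → ContDiff ℝ ((k - j : ℕ)) ((pder i)^[j] f) := by
  intro j
  induction j with
  | zero => intro _; simpa using hf
  | succ j ih =>
    intro hj
    have h1 : ContDiff ℝ ((k - j : ℕ)) ((pder i)^[j] f) := ih (Nat.le_of_succ_le hj)
    have h2 : k - j = (k - (j + 1)) + 1 := by omega
    rw [h2] at h1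
    rw [Function.iterate_succ_apply']
    exact pder_contDiff h1 i

private lemma iter_zero {f : (Fin d → ℝ) → ℝ}
    (h0 : ∀ x, x ∉ Set.Icc (0 : Fin d → ℝ) 1 → f x = 0) (i : Fin d) :
    ∀ j x, x ∉ Set.Icc (0 : Fin d → ℝ) 1 → (pder i)^[j] f x = 0 := by
  intro j
  induction j with
  | zero => simpa using h0
  | succ j ih =>
    intro x hx
    have hU : IsOpen ((Set.Icc (0 : Fin d → ℝ) 1)ᶜ) := isClosed_Icc.isOpen_compl
    have hev : (pder i)^[j] f =ᶠ[nhds x] (fun _ => (0 : ℝ)) := by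
      filter_upwards [hU.mem_nhds hx] with y hy using ih y hy
    rw [Function.iterate_succ_apply', pder, hev.fderiv_eq]
    simp

private lemma foldr_zero (f : (Fin d → ℝ) → ℝ) (s : Fin d → ℕ) :
    ∀ l : List (Fin d), (∀ i ∈ l, s i = 0) →
      l.foldr (fun i g => (pder i)^[s i] g) f = f := by
  intro l
  induction l with
  | nil => intro _; rfl
  | cons a l ih =>
    intro h
    rw [List.foldr_cons, ih (fun i hi => h i (List.mem_cons_of_mem a hi)),
      h a List.mem_cons_self]
    rfl

private lemma mderiv_single (m k : ℕ) (f : (Fin (m + 1) → ℝ) → ℝ) :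
    mderiv (Pi.single 0 k) f = (pder (0 : Fin (m + 1)))^[k] f := by
  unfold mderiv
  rw [List.finRange_succ, List.foldr_cons,
    foldr_zero f _ (List.map Fin.succ (List.finRange m)) ?_, Pi.single_eq_same]
  intro i hi
  obtain ⟨j, _, rfl⟩ := List.mem_map.1 hi
  exact Pi.single_eq_of_ne (Fin.succ_ne_zero j) k

end Aux

/-- Uniform boundedness of the Hölder class: every `f ∈ H(β, L)`
satisfies `|f(x)| ≤ d^{3⌊β⌋/2 + 1/2} L` for all `x`. -/
theorem stmt13 (d : ℕ) (hd : 1 ≤ d) (β L : ℝ) (hβ : 0 < β) (hL : 0 < L)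
    (f : (Fin d → ℝ) → ℝ) (hf : HolderClass d β L f) :
    ∀ x : Fin d → ℝ, |f x| ≤ (d : ℝ) ^ (3 * (lflr β : ℝ) / 2 + 1 / 2) * L := by
  obtain ⟨m, rfl⟩ : ∃ m, d = m + 1 := ⟨d - 1, by omega⟩
  set k : ℕ := lflr β with hkdef
  obtain ⟨h0, hC, hH⟩ := hf
  have hceil : 1 ≤ ⌈β⌉₊ := Nat.one_le_ceil_iff.2 hβ
  have hkcast : (k : ℝ) = (⌈β⌉₊ : ℝ) - 1 := by
    rw [hkdef, lflr, Nat.cast_sub hceil, Nat.cast_one]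
  have hklt : (k : ℝ) < β := by
    have := Nat.ceil_lt_add_one hβ.le
    rw [hkcast]; linarith
  have hkle : β ≤ (k : ℝ) + 1 := by
    have := Nat.le_ceil β
    rw [hkcast]; linarith
  intro x
  -- vector e₁
  set v : Fin (m + 1) → ℝ := Pi.single 0 1 with hv
  -- main bound for each ε > 0
  have main : ∀ ε : ℝ, 0 < ε → |f x| ≤ L * (1 + ε) ^ (β - (k : ℝ)) * (1 + ε) ^ k := by
    intro ε hε
    have h1ε : (0 : ℝ) < 1 + ε := by linarith
    -- key: bound for g outside the cube via MVT-chain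
    have step : ∀ j : ℕ, j ≤ k → ∀ y : Fin (m + 1) → ℝ,
        |(pder (0 : Fin (m + 1)))^[k - j] f y| ≤ L * (1 + ε) ^ (β - (k : ℝ)) * (1 + ε) ^ j := by
      intro j
      induction j with
      | zero =>
        intro _ y
        rw [pow_zero, mul_one]
        by_cases hy : y ∈ Set.Icc (0 : Fin (m + 1) → ℝ) 1
        · -- Hölder condition with a point outside the cube
          set z : Fin (m + 1) → ℝ := y + (-(1 + ε)) • v with hz
          have hzout : z ∉ Set.Icc (0 : Fin (m + 1) → ℝ) 1 := by
            intro hmem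
            have h1 : (0 : ℝ) ≤ z 0 := hmem.1 0
            have h2 : z 0 = y 0 - (1 + ε) := by
              simp [hz, hv, Pi.single_eq_same]; ring
            have h3 : y 0 ≤ 1 := hy.2 0
            rw [h2] at h1; linarith
          have hsum : (∑ i, (Pi.single (0 : Fin (m + 1)) k : Fin (m + 1) → ℕ) i) = lflr β := by
            rw [Finset.sum_pi_single']; simp [hkdef]
          have hHyz := hH (Pi.single 0 k) hsum y z
          rw [mderiv_single] at hHyz
          have hzzero : mderiv (Pi.single 0 k) f z = 0 := by
            rw [mderiv_single]; exact iter_zero h0 0 k z hzout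
          rw [mderiv_single] at hzzero
          rw [hzzero, sub_zero] at hHyz
          have hnorm : l2norm (y - z) = 1 + ε := by
            have hyz : y - z = (1 + ε) • v := by
              rw [hz]; ext i; simp; ring
            rw [hyz, l2norm]
            have : ∀ i, ((1 + ε) • v) i ^ 2 = (Pi.single (0 : Fin (m + 1)) ((1 + ε) ^ 2) : Fin (m + 1) → ℝ) i := by
              intro i
              rcases eq_or_ne i 0 with rfl | hi
              · simp [hv, Pi.single_eq_same]
              · simp [hv, Pi.single_eq_of_ne hi]
            rw [Finset.sum_congr rfl (fun i _ => this i), Finset.sum_pi_single']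
            simp [Real.sqrt_sq h1ε.le]
          rw [hnorm] at hHyz
          simpa [hkdef] using hHyz
        · rw [iter_zero h0 0 (k - 0) y hy]
          have : (0 : ℝ) < L * (1 + ε) ^ (β - (k : ℝ)) := by positivity
          simpa using this.le
      | succ j ih =>
        intro hj y
        have hjk : j < k := hj
        have ihy := ih (Nat.le_of_succ_le hj)
        set g : (Fin (m + 1) → ℝ) → ℝ := (pder (0 : Fin (m + 1)))^[k - (j + 1)] f with hg
        have hiter : (pder (0 : Fin (m + 1)))^[k - j] f = pder 0 g := by
          rw [hg]
          have : k - j = (k - (j + 1)) + 1 := by omega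
          rw [this, Function.iterate_succ_apply']
        show |g y| ≤ _
        by_cases hy : y ∈ Set.Icc (0 : Fin (m + 1) → ℝ) 1
        · -- mean value theorem along the segment
          have hgdiff : Differentiable ℝ g := by
            have hcd : ContDiff ℝ ((k - (k - (j + 1)) : ℕ)) g :=
              iter_contDiff hC 0 (k - (j + 1)) (by omega)
            have : k - (k - (j + 1)) = j + 1 := by omega
            rw [this] at hcd
            exact hcd.differentiable (by simp)
          set a : ℝ := -(1 + ε) with ha
          set h : ℝ → ℝ := fun t => g (y + t • v) with hh
          have hderiv : ∀ t ∈ Set.Icc a 0,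
              HasDerivWithinAt h (pder 0 g (y + t • v)) (Set.Icc a 0) t := by
            intro t _
            have h1 : HasDerivAt (fun t : ℝ => y + t • v) v t := by
              simpa using ((hasDerivAt_id t).smul_const v).const_add y
            have h2 := ((hgdiff (y + t • v)).hasFDerivAt).comp_hasDerivAt t h1
            exact h2.hasDerivWithinAt
          have hbound : ∀ t ∈ Set.Ico a 0,
              ‖pder 0 g (y + t • v)‖ ≤ L * (1 + ε) ^ (β - (k : ℝ)) * (1 + ε) ^ j := by
            intro t _
            rw [Real.norm_eq_abs, ← funext_iff.1 hiter (y + t • v)]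
            exact ihy (y + t • v)
          have ha0 : a ≤ 0 := by rw [ha]; linarith
          have hmvt := norm_image_sub_le_of_norm_deriv_le_segment' hderiv hbound 0
            (Set.right_mem_Icc.2 ha0)
          have hha : h a = 0 := by
            rw [hh]
            apply iter_zero h0 0 (k - (j + 1)) _
            intro hmem
            have h1 : (0 : ℝ) ≤ (y + a • v) 0 := hmem.1 0
            have h2 : (y + a • v) 0 = y 0 - (1 + ε) := by
              simp [ha, hv, Pi.single_eq_same]; ring
            have h3 : y 0 ≤ 1 := hy.2 0
            rw [h2] at h1; linarith
          have hh0 : h 0 = g y := by rw [hh]; simp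
          rw [hh0, hha, sub_zero, Real.norm_eq_abs] at hmvt
          calc |g y| ≤ L * (1 + ε) ^ (β - (k : ℝ)) * (1 + ε) ^ j * (0 - a) := hmvt
            _ = L * (1 + ε) ^ (β - (k : ℝ)) * (1 + ε) ^ (j + 1) := by
                rw [ha]; ring
        · show |(pder (0 : Fin (m + 1)))^[k - (j + 1)] f y| ≤ _
          rw [iter_zero h0 0 (k - (j + 1)) y hy]
          have : (0 : ℝ) < L * (1 + ε) ^ (β - (k : ℝ)) * (1 + ε) ^ (j + 1) := by positivity
          simpa using this.le
    have := step k le_rfl x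
    simpa using this
  -- take the limit ε → 0⁺
  have hfL : |f x| ≤ L := by
    have hcont : ContinuousAt (fun ε : ℝ => L * (1 + ε) ^ (β - (k : ℝ)) * (1 + ε) ^ k) 0 := by
      have c1 : ContinuousAt (fun ε : ℝ => 1 + ε) 0 := by fun_prop
      have c2 : ContinuousAt (fun t : ℝ => t ^ (β - (k : ℝ))) ((fun ε : ℝ => 1 + ε) 0) := by
        simpa using Real.continuousAt_rpow_const 1 (β - (k : ℝ)) (Or.inl one_ne_zero)
      have c3 : ContinuousAt (fun ε : ℝ => (1 + ε) ^ (β - (k : ℝ))) 0 := c2.comp c1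
      have c4 : ContinuousAt (fun ε : ℝ => (1 + ε) ^ k) 0 := by fun_prop
      exact (continuousAt_const.mul c3).mul c4
    have htend : Filter.Tendsto (fun ε : ℝ => L * (1 + ε) ^ (β - (k : ℝ)) * (1 + ε) ^ k)
        (nhdsWithin 0 (Set.Ioi 0)) (nhds L) := by
      have := (hcont.continuousWithinAt (s := Set.Ioi (0 : ℝ))).tendsto
      simpa using this
    refine ge_of_tendsto htend ?_
    filter_upwards [self_mem_nhdsWithin] with ε hε using main ε hε
  have hpow : (1 : ℝ) ≤ (↑(m + 1) : ℝ) ^ (3 * (k : ℝ) / 2 + 1 / 2) := by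
    apply Real.one_le_rpow
    · exact_mod_cast hd
    · positivity
  calc |f x| ≤ L := hfL
    _ = 1 * L := (one_mul L).symm
    _ ≤ (↑(m + 1) : ℝ) ^ (3 * (k : ℝ) / 2 + 1 / 2) * L :=
        mul_le_mul_of_nonneg_right hpow hL.le
end
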